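/- Every point y ∈ D that violates the first-order KKT conditions but is a fixed point of MWU has the property that the projected Jacobian of the MWU map at y has an eigenvalue of absolute value strictly greater than 1. Concretely: if y_{ij} = 0 and ∂P/∂x_{ij}(y) > Σ_{j'} y_{ij'} ∂P/∂x_{ij'}(y), then the projected Jacobian at y has the eigenvalue (1 + ε_i ∂P/∂x_{ij}(y)) / (1 + ε_i Σ_{j'} y_{ij'} ∂P/∂x_{ij'}(y)) > 1. -/

import Mathlib

open Matrix


/-- The product of `N` simplices with `M` coordinates each. -/
def simplexProd (N M : ℕ) : Set (Fin N × Fin M → ℝ) :=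
  {x | (∀ a, 0 ≤ x a) ∧ ∀ i : Fin N, ∑ j : Fin M, x (i, j) = 1}

/-- The MWU map with per-player stepsizes `ε i`:
`T(x)_{ij} = x_{ij}(1 + ε_i ∂P/∂x_{ij}(x)) / (1 + ε_i ∑_s x_{is} ∂P/∂x_{is}(x))`. -/
noncomputable def mwuMapE {N M : ℕ} (P : (Fin N × Fin M → ℝ) → ℝ) (ε : Fin N → ℝ)
    (x : Fin N × Fin M → ℝ) : Fin N × Fin M → ℝ :=
  fun a =>
    x a * (1 + ε a.1 * fderiv ℝ P x (Pi.single a 1)) /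
      (1 + ε a.1 * ∑ s : Fin M, x (a.1, s) * fderiv ℝ P x (Pi.single (a.1, s) 1))

/-- **Fixed points violating first-order KKT are unstable.** If `y` is a fixed point of
MWU with `y_{ij} = 0` and `∂P/∂x_{ij}(y) > ∑_{j'} y_{ij'} ∂P/∂x_{ij'}(y)`, then the
Jacobian of the MWU map at `y` has the eigenvalue
`(1 + ε_i ∂P/∂x_{ij}(y)) / (1 + ε_i ∑_{j'} y_{ij'} ∂P/∂x_{ij'}(y))`, which is `> 1`. -/
theorem mwu_non_first_order_stationary_unstable (N M : ℕ)
    (P : (Fin N × Fin M → ℝ) → ℝ) (U : Set (Fin N × Fin M → ℝ))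
    (hU : IsOpen U) (hDU : simplexProd N M ⊆ U)
    (hP : ContDiffOn ℝ 2 P U)
    (ε : Fin N → ℝ) (hε : ∀ i, 0 < ε i)
    (y : Fin N × Fin M → ℝ) (hy : y ∈ simplexProd N M)
    (hfix : mwuMapE P ε y = y)
    (hden : ∀ i : Fin N,
      0 < 1 + ε i * ∑ s : Fin M, y (i, s) * fderiv ℝ P y (Pi.single (i, s) 1))
    (i : Fin N) (j : Fin M)
    (hzero : y (i, j) = 0)
    (hviol : fderiv ℝ P y (Pi.single (i, j) 1) >
      ∑ j' : Fin M, y (i, j') * fderiv ℝ P y (Pi.single (i, j') 1)) :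
    1 < (1 + ε i * fderiv ℝ P y (Pi.single (i, j) 1)) /
          (1 + ε i * ∑ j' : Fin M, y (i, j') * fderiv ℝ P y (Pi.single (i, j') 1)) ∧
    Module.End.HasEigenvalue
      (Matrix.toLin'
        (Matrix.of fun a b : Fin N × Fin M =>
          fderiv ℝ (fun x => mwuMapE P ε x a) y (Pi.single b 1)))
      ((1 + ε i * fderiv ℝ P y (Pi.single (i, j) 1)) /
        (1 + ε i * ∑ j' : Fin M, y (i, j') * fderiv ℝ P y (Pi.single (i, j') 1))) := by
  have hD := hden i
  set S := ∑ j' : Fin M, y (i, j') * fderiv ℝ P y (Pi.single (i, j') 1) with hS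
  set μ := (1 + ε i * fderiv ℝ P y (Pi.single (i, j) 1)) / (1 + ε i * S) with hμ
  have h1 : 1 < μ := by
    rw [hμ, lt_div_iff₀ hD]
    nlinarith [hε i, mul_lt_mul_of_pos_left hviol (hε i)]
  refine ⟨h1, ?_⟩
  -- differentiability facts
  have hyU : y ∈ U := hDU hy
  have h2 : ContDiffAt ℝ 2 P y := hP.contDiffAt (hU.mem_nhds hyU)
  have h1' : ContDiffAt ℝ 1 (fderiv ℝ P) y := h2.fderiv_right (by norm_num)
  have hPd : ∀ v : Fin N × Fin M → ℝ, DifferentiableAt ℝ (fun x => fderiv ℝ P x v) y :=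
    fun v => (h1'.differentiableAt one_ne_zero).clm_apply (differentiableAt_const v)
  have hproj : ∀ a : Fin N × Fin M,
      DifferentiableAt ℝ (fun x : Fin N × Fin M → ℝ => x a) y :=
    fun a => (ContinuousLinearMap.proj (R := ℝ) (φ := fun _ : Fin N × Fin M => ℝ) a).differentiableAt
  have hDne : (1 + ε i * ∑ s : Fin M, y (i, s) * fderiv ℝ P y (Pi.single (i, s) 1)) ≠ 0 :=
    ne_of_gt hD
  have hnum : DifferentiableAt ℝ
      (fun x => 1 + ε i * fderiv ℝ P x (Pi.single (i, j) 1)) y :=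
    ((hPd _).const_mul (ε i)).const_add 1
  have hsumd : DifferentiableAt ℝ
      (fun x : Fin N × Fin M → ℝ =>
        ∑ s : Fin M, x (i, s) * fderiv ℝ P x (Pi.single (i, s) 1)) y :=
    DifferentiableAt.fun_sum fun s _ => (hproj (i, s)).fun_mul (hPd _)
  have hdend : DifferentiableAt ℝ
      (fun x : Fin N × Fin M → ℝ =>
        1 + ε i * ∑ s : Fin M, x (i, s) * fderiv ℝ P x (Pi.single (i, s) 1)) y :=
    (hsumd.const_mul (ε i)).const_add 1
  have hg : DifferentiableAt ℝ (fun x => (1 + ε i * fderiv ℝ P x (Pi.single (i, j) 1)) /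
      (1 + ε i * ∑ s : Fin M, x (i, s) * fderiv ℝ P x (Pi.single (i, s) 1))) y :=
    by
      have h := hnum.fun_mul (hdend.fun_inv hDne)
      simpa [div_eq_mul_inv] using h
  have heq : (fun x => mwuMapE P ε x (i, j)) =
      fun x : Fin N × Fin M → ℝ => x (i, j) *
        ((1 + ε i * fderiv ℝ P x (Pi.single (i, j) 1)) /
          (1 + ε i * ∑ s : Fin M, x (i, s) * fderiv ℝ P x (Pi.single (i, s) 1))) := by
    funext x
    simp [mwuMapE, mul_div_assoc]
  have hmul := ((ContinuousLinearMap.proj (R := ℝ) (i, j)).hasFDerivAt (x := y)).mul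
    hg.hasFDerivAt
  have hrow : fderiv ℝ (fun x => mwuMapE P ε x (i, j)) y =
      μ • ContinuousLinearMap.proj (R := ℝ) (i, j) := by
    rw [heq]
    refine hmul.fderiv.trans ?_
    have hz : (ContinuousLinearMap.proj (R := ℝ) (i, j)) y = 0 := hzero
    rw [hz, zero_smul, zero_add, hμ, hS]
  set Mtx : Matrix (Fin N × Fin M) (Fin N × Fin M) ℝ :=
    Matrix.of fun a b : Fin N × Fin M =>
      fderiv ℝ (fun x => mwuMapE P ε x a) y (Pi.single b 1) with hMtx
  set e : Fin N × Fin M → ℝ := Pi.single (i, j) 1 with he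
  have he0 : e ≠ 0 := by
    intro h
    have := congrFun h (i, j)
    simp [he] at this
  have hMe : Mtxᵀ *ᵥ e = μ • e := by
    funext b
    have hrowb : Mtx (i, j) b = μ * (Pi.single (i, j) 1 : Fin N × Fin M → ℝ) b := by
      rw [hMtx]
      show fderiv ℝ (fun x => mwuMapE P ε x (i, j)) y (Pi.single b 1) = _
      rw [hrow]
      simp [Pi.single_apply, eq_comm]
    simp only [Matrix.mulVec, Matrix.transpose_apply, dotProduct, he,
      Pi.single_apply, mul_ite, mul_one, mul_zero, Finset.sum_ite_eq', Finset.mem_univ,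
      if_true, Pi.smul_apply, smul_eq_mul]
    rw [hrowb]
    simp [Pi.single_apply]
  have hdetT : (Mtxᵀ - μ • 1).det = 0 := by
    refine Matrix.exists_mulVec_eq_zero_iff.mp ⟨e, he0, ?_⟩
    rw [Matrix.sub_mulVec, Matrix.smul_mulVec, Matrix.one_mulVec, hMe, sub_self]
  have hdet : (Mtx - μ • 1).det = 0 := by
    rw [← Matrix.det_transpose]
    have ht : (Mtx - μ • 1)ᵀ = Mtxᵀ - μ • 1 := by
      rw [Matrix.transpose_sub, Matrix.transpose_smul, Matrix.transpose_one]
    rw [ht, hdetT]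
  obtain ⟨v, hv0, hv⟩ := Matrix.exists_mulVec_eq_zero_iff.mpr hdet
  rw [Matrix.sub_mulVec, Matrix.smul_mulVec, Matrix.one_mulVec, sub_eq_zero] at hv
  refine Module.End.hasEigenvalue_of_hasEigenvector (x := v) ⟨?_, hv0⟩
  rw [Module.End.mem_eigenspace_iff, Matrix.toLin'_apply]
  exact hv
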